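/- Unbiasedness of the standard G-estimation equation (single stage, correct propensity): Let H : Ω → ℝ^d be measurable, A a treatment indicator, and Y an integrable random variable. Suppose there are Borel functions ν, C : ℝ^d → ℝ with ν(H) integrable, C bounded, and E[Y | σ(H,A)] = ν(H) + A·C(H) μ-a.e., and let π : ℝ^d → ℝ be Borel with π(H) = E[A | σ(H)] μ-a.e. Then for all bounded Borel functions λ, θ : ℝ^d → ℝ, E[ λ(H)·(A − π(H))·(Y − A·C(H) + θ(H)) ] = 0. -/

import Mathlib

open MeasureTheory

/-- Pull-out: integral of a sub-σ-algebra–measurable function times an integrable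
function equals the integral against the conditional expectation. -/
lemma integral_mul_eq_integral_mul_condexp {Ω : Type*} [m0 : MeasurableSpace Ω]
    {μ : Measure Ω} [IsProbabilityMeasure μ] {m : MeasurableSpace Ω} (hm : m ≤ m0)
    {f X : Ω → ℝ} (hf : StronglyMeasurable[m] f) (hfX : Integrable (f * X) μ)
    (hX : Integrable X μ) :
    ∫ ω, f ω * X ω ∂μ = ∫ ω, f ω * (μ[X|m]) ω ∂μ := by
  have h1 : ∫ ω, f ω * X ω ∂μ = ∫ ω, (μ[f * X|m]) ω ∂μ := (integral_condExp hm).symm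
  rw [h1]
  exact integral_congr_ae (condExp_mul_of_stronglyMeasurable_left hf hfX hX)

/-- Abstract version of the unbiasedness of the single-stage G-estimation equation,
with the two sub-σ-algebras given explicitly. -/
lemma G_estimation_aux {Ω : Type*} [m0 : MeasurableSpace Ω]
    (μ : Measure Ω) [IsProbabilityMeasure μ]
    (m1 m2 : MeasurableSpace Ω) (hm1 : m1 ≤ m0) (hm2 : m2 ≤ m0)
    {d : ℕ} (H : Ω → (Fin d → ℝ)) (hHm1 : Measurable[m1] H) (hHm2 : Measurable[m2] H)
    (A : Ω → ℝ) (hAm2 : Measurable[m2] A) (hA01 : ∀ ω, A ω = 0 ∨ A ω = 1)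
    (Y : Ω → ℝ) (hY : Integrable Y μ)
    (ν C : (Fin d → ℝ) → ℝ) (hν : Measurable ν) (hC : Measurable C)
    (hνint : Integrable (fun ω => ν (H ω)) μ)
    (MC : ℝ) (hMC : ∀ x, |C x| ≤ MC)
    (hblip : μ[Y | m2] =ᵐ[μ] fun ω => ν (H ω) + A ω * C (H ω))
    (π : (Fin d → ℝ) → ℝ) (hπ : Measurable π)
    (hπcorrect : (fun ω => π (H ω)) =ᵐ[μ] μ[A | m1])
    (lam θ : (Fin d → ℝ) → ℝ) (hlam : Measurable lam) (hθ : Measurable θ)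
    (Ml : ℝ) (hMl : ∀ x, |lam x| ≤ Ml) (Mθ : ℝ) (hMθ : ∀ x, |θ x| ≤ Mθ) :
    ∫ ω, lam (H ω) * (A ω - π (H ω)) * (Y ω - A ω * C (H ω) + θ (H ω)) ∂μ = 0 := by
  have hA : Measurable[m0] A := hAm2.mono hm2 le_rfl
  have hH : Measurable[m0] H := hHm1.mono hm1 le_rfl
  have hMl0 : 0 ≤ Ml := le_trans (abs_nonneg _) (hMl 0)
  have hMC0 : 0 ≤ MC := le_trans (abs_nonneg _) (hMC 0)
  have hMθ0 : 0 ≤ Mθ := le_trans (abs_nonneg _) (hMθ 0)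
  have hAbd : ∀ ω, |A ω| ≤ 1 := by
    intro ω; rcases hA01 ω with h | h <;> simp [h]
  have hbd : ∀ (g : Ω → ℝ) (c : ℝ), AEStronglyMeasurable[m0] g μ → (∀ ω, |g ω| ≤ c) →
      Integrable g μ := by
    intro g c hg hgc
    refine Integrable.mono' (integrable_const c) hg ?_
    filter_upwards with ω using (by simpa [Real.norm_eq_abs] using hgc ω)
  have hAint : Integrable A μ := hbd A 1 hA.aestronglyMeasurable hAbd
  have hcond0 : (0 : Ω → ℝ) ≤ᵐ[μ] μ[A|m1] :=
    condExp_nonneg (Filter.Eventually.of_forall fun ω => by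
      rcases hA01 ω with h | h <;> simp [h])
  have hcond1 : μ[A|m1] ≤ᵐ[μ] fun _ => (1 : ℝ) := by
    have h1 : μ[A|m1] ≤ᵐ[μ] μ[(fun _ => (1 : ℝ))|m1] :=
      condExp_mono hAint (integrable_const 1)
        (Filter.Eventually.of_forall fun ω => by rcases hA01 ω with h | h <;> simp [h])
    have h2 : μ[(fun _ => (1 : ℝ))|m1] = fun _ => (1 : ℝ) := condExp_const hm1 (1 : ℝ)
    filter_upwards [h1] with ω hω1
    calc (μ[A|m1]) ω ≤ (μ[(fun _ => (1 : ℝ))|m1]) ω := hω1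
    _ = 1 := by rw [h2]
  have hπbd : ∀ᵐ ω ∂μ, |π (H ω)| ≤ 1 := by
    filter_upwards [hπcorrect, hcond0, hcond1] with ω h e0 e1
    rw [abs_le]
    refine ⟨?_, ?_⟩
    · rw [h]; exact le_trans (by norm_num) e0
    · rw [h]; exact e1
  -- the weight f
  set f : Ω → ℝ := fun ω => lam (H ω) * (A ω - π (H ω)) with hfdef
  have hfm2 : StronglyMeasurable[m2] f :=
    ((hlam.comp hHm2).mul (hAm2.sub (hπ.comp hHm2))).stronglyMeasurable
  have hfaesm : AEStronglyMeasurable[m0] f μ := (hfm2.mono hm2).aestronglyMeasurable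
  have hfbd : ∀ᵐ ω ∂μ, ‖f ω‖ ≤ Ml * 2 := by
    filter_upwards [hπbd] with ω hω
    rw [Real.norm_eq_abs]
    calc |lam (H ω) * (A ω - π (H ω))| = |lam (H ω)| * |A ω - π (H ω)| := abs_mul _ _
    _ ≤ Ml * 2 := by
        refine mul_le_mul (hMl _) ?_ (abs_nonneg _) hMl0
        calc |A ω - π (H ω)| ≤ |A ω| + |π (H ω)| := abs_sub _ _
        _ ≤ 1 + 1 := add_le_add (hAbd ω) hω
        _ = 2 := by norm_num
  -- integrabilities involving f
  have hfY : Integrable (fun ω => f ω * Y ω) μ := hY.bdd_mul hfaesm hfbd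
  have hACbd : ∀ ω, |A ω * C (H ω)| ≤ MC := fun ω => by
    calc |A ω * C (H ω)| = |A ω| * |C (H ω)| := abs_mul _ _
    _ ≤ 1 * MC := mul_le_mul (hAbd ω) (hMC _) (abs_nonneg _) zero_le_one
    _ = MC := one_mul _
  have hθACint : Integrable (fun ω => θ (H ω) - A ω * C (H ω)) μ :=
    hbd _ (Mθ + MC)
      (((hθ.comp hH).sub (hA.mul (hC.comp hH))).aestronglyMeasurable)
      (fun ω => le_trans (abs_sub _ _) (add_le_add (hMθ _) (hACbd ω)))
  have hfθAC : Integrable (fun ω => f ω * (θ (H ω) - A ω * C (H ω))) μ :=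
    hθACint.bdd_mul hfaesm hfbd
  have hνACint : Integrable (fun ω => ν (H ω) + A ω * C (H ω)) μ :=
    hνint.add (hbd _ MC ((hA.mul (hC.comp hH)).aestronglyMeasurable) hACbd)
  have hfνAC : Integrable (fun ω => f ω * (ν (H ω) + A ω * C (H ω))) μ :=
    hνACint.bdd_mul hfaesm hfbd
  -- Step A: replace Y by its conditional expectation given (H, A)
  have stepA : ∫ ω, f ω * Y ω ∂μ = ∫ ω, f ω * (ν (H ω) + A ω * C (H ω)) ∂μ := by
    rw [integral_mul_eq_integral_mul_condexp (m0 := m0) hm2 hfm2 (by exact hfY) hY]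
    exact integral_congr_ae (by filter_upwards [hblip] with ω hω; rw [hω])
  -- Step B: split the integrand
  have goal1 : ∫ ω, lam (H ω) * (A ω - π (H ω)) * (Y ω - A ω * C (H ω) + θ (H ω)) ∂μ
      = ∫ ω, f ω * (ν (H ω) + θ (H ω)) ∂μ := by
    calc ∫ ω, lam (H ω) * (A ω - π (H ω)) * (Y ω - A ω * C (H ω) + θ (H ω)) ∂μ
        = ∫ ω, f ω * Y ω + f ω * (θ (H ω) - A ω * C (H ω)) ∂μ :=
          integral_congr_ae (Filter.Eventually.of_forall fun ω => by rw [hfdef]; ring)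
    _ = (∫ ω, f ω * Y ω ∂μ) + ∫ ω, f ω * (θ (H ω) - A ω * C (H ω)) ∂μ :=
          integral_add hfY hfθAC
    _ = (∫ ω, f ω * (ν (H ω) + A ω * C (H ω)) ∂μ)
          + ∫ ω, f ω * (θ (H ω) - A ω * C (H ω)) ∂μ := by rw [stepA]
    _ = ∫ ω, f ω * (ν (H ω) + A ω * C (H ω)) + f ω * (θ (H ω) - A ω * C (H ω)) ∂μ :=
          (integral_add hfνAC hfθAC).symm
    _ = ∫ ω, f ω * (ν (H ω) + θ (H ω)) ∂μ :=
          integral_congr_ae (Filter.Eventually.of_forall fun ω => by ring)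
  -- Step C: condition on H
  set φ : Ω → ℝ := fun ω => lam (H ω) * (ν (H ω) + θ (H ω)) with hφdef
  have hφm1 : StronglyMeasurable[m1] φ :=
    ((hlam.comp hHm1).mul ((hν.comp hHm1).add (hθ.comp hHm1))).stronglyMeasurable
  have hφint : Integrable φ μ := by
    have h1 : Integrable (fun ω => ν (H ω) + θ (H ω)) μ :=
      hνint.add (hbd _ Mθ ((hθ.comp hH).aestronglyMeasurable) fun ω => hMθ _)
    exact h1.bdd_mul ((hlam.comp hH).aestronglyMeasurable)
      (Filter.Eventually.of_forall fun ω => by simpa [Real.norm_eq_abs] using hMl _)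
  have hφA : Integrable (fun ω => φ ω * A ω) μ :=
    (hφint.bdd_mul hA.aestronglyMeasurable
      (Filter.Eventually.of_forall fun ω => by
        simpa [Real.norm_eq_abs] using hAbd ω)).congr
      (Filter.Eventually.of_forall fun ω => mul_comm _ _)
  have hφπ : Integrable (fun ω => φ ω * π (H ω)) μ :=
    (hφint.bdd_mul ((hπ.comp hH).aestronglyMeasurable)
      (by filter_upwards [hπbd] with ω h using by simpa [Real.norm_eq_abs] using h)).congr
      (Filter.Eventually.of_forall fun ω => mul_comm _ _)
  have stepC : ∫ ω, f ω * (ν (H ω) + θ (H ω)) ∂μ = 0 := by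
    have h1 : ∫ ω, f ω * (ν (H ω) + θ (H ω)) ∂μ
        = ∫ ω, φ ω * A ω - φ ω * π (H ω) ∂μ :=
      integral_congr_ae (Filter.Eventually.of_forall fun ω => by
        rw [hfdef, hφdef]; ring)
    have h2 : ∫ ω, φ ω * A ω ∂μ = ∫ ω, φ ω * (μ[A|m1]) ω ∂μ :=
      integral_mul_eq_integral_mul_condexp (m0 := m0) hm1 hφm1 (by exact hφA) hAint
    have h3 : ∫ ω, φ ω * π (H ω) ∂μ = ∫ ω, φ ω * (μ[A|m1]) ω ∂μ :=
      integral_congr_ae (by filter_upwards [hπcorrect] with ω hω; rw [hω])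
    rw [h1, integral_sub hφA hφπ, h2, h3, sub_self]
  rw [goal1, stepC]

/-- Unbiasedness of the standard G-estimation equation (single stage, correct
propensity model). -/
theorem standard_G_estimation_unbiased
    {Ω : Type*} [MeasurableSpace Ω] (μ : Measure Ω) [IsProbabilityMeasure μ]
    {d : ℕ} (H : Ω → (Fin d → ℝ)) (hH : Measurable H)
    (A : Ω → ℝ) (hA : Measurable A) (hA01 : ∀ ω, A ω = 0 ∨ A ω = 1)
    (Y : Ω → ℝ) (hY : Integrable Y μ)
    (ν C : (Fin d → ℝ) → ℝ) (hν : Measurable ν) (hC : Measurable C)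
    (hνint : Integrable (fun ω => ν (H ω)) μ)
    (hCbdd : ∃ M, ∀ x, |C x| ≤ M)
    (hblip : μ[Y | MeasurableSpace.comap (fun ω => (H ω, A ω)) inferInstance]
      =ᵐ[μ] fun ω => ν (H ω) + A ω * C (H ω))
    (π : (Fin d → ℝ) → ℝ) (hπ : Measurable π)
    (hπcorrect : (fun ω => π (H ω)) =ᵐ[μ] μ[A | MeasurableSpace.comap H inferInstance]) :
    ∀ lam θ : (Fin d → ℝ) → ℝ, Measurable lam → Measurable θ →
      (∃ M, ∀ x, |lam x| ≤ M) → (∃ M, ∀ x, |θ x| ≤ M) →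
      ∫ ω, lam (H ω) * (A ω - π (H ω)) * (Y ω - A ω * C (H ω) + θ (H ω)) ∂μ = 0 := by
  obtain ⟨MC, hMC⟩ := hCbdd
  rintro lam θ hlam hθ ⟨Ml, hMl⟩ ⟨Mθ, hMθ⟩
  exact G_estimation_aux μ
    (MeasurableSpace.comap H inferInstance)
    (MeasurableSpace.comap (fun ω => (H ω, A ω)) inferInstance)
    (measurable_iff_comap_le.mp hH)
    (measurable_iff_comap_le.mp (hH.prodMk hA))
    H (measurable_iff_comap_le.mpr le_rfl)
    (measurable_fst.comp (measurable_iff_comap_le.mpr le_rfl))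
    A (measurable_snd.comp (measurable_iff_comap_le.mpr le_rfl)) hA01
    Y hY ν C hν hC hνint MC hMC hblip π hπ hπcorrect
    lam θ hlam hθ Ml hMl Mθ hMθ
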